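/- Let Φ be a locally finite set of points in ℝ² that is (σ,ρ,ν)-ring regulated about the origin, with every point of Φ at distance greater than r₀ from the origin, let ℓ be a path-loss function as in the context, γ₀ > 0, m > 0, and let η₀ > 0 and α ∈ (0,1) satisfy α/η₀ > σ_β. Then sup_{x ∈ Φ, ‖x‖ ≤ τ₀} D(x, Φ) ≤ m / log₂(1 + η₀). -/

import Mathlib

open MeasureTheory Set

noncomputable section

abbrev Plane : Type := EuclideanSpace ℝ (Fin 2)

/-- `Φ` is `(σ,ρ,ν)`-ring regulated about the origin. -/
def RingRegulated (Φ : Set Plane) (σ ρ ν : ℝ) : Prop :=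
  ∀ r R : ℝ, 0 ≤ r → r < R →
    ((Φ ∩ {z : Plane | r < ‖z‖ ∧ ‖z‖ < R}).ncard : ℝ)
      ≤ σ + ρ * (R - r) + ν * (R ^ 2 - r ^ 2)

/-- The tail interference at the origin from points of `Φ` at distance greater than `r`. -/
def tailInterference (ℓ : ℝ → ℝ) (Φ : Set Plane) (r : ℝ) : ℝ :=
  ∑' w : {w : Plane // w ∈ Φ ∧ r < ‖w‖}, ℓ ‖(w : Plane)‖

/-- The signal-to-residual-interference-plus-noise ratio of the transmitter at `x`
with respect to the receiver at the origin, under successive interference cancellation. -/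
def SrINR (ℓ : ℝ → ℝ) (γ₀ : ℝ) (Φ : Set Plane) (x : Plane) : ℝ :=
  ℓ ‖x‖ / (tailInterference ℓ Φ ‖x‖ + γ₀)

/-- The coverage distance lower bound `τ₀`. -/
def tau0 (C' γ₀ β σβ ρβ νβ η₀ α : ℝ) : ℝ :=
  min ((Real.sqrt (ρβ ^ 2 + 4 * νβ * (α / η₀ - σβ)) - ρβ) / (2 * νβ))
    ((C' * (1 - α) / (η₀ * γ₀)) ^ (1 / β))

/-- The rate of the link from `x` to the typical receiver at the origin:
the infimum over the transmitters `w ∈ Φ` with `‖w‖ ≤ ‖x‖` of `log₂(1 + SrINR(w,Φ))`. -/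
def rate (ℓ : ℝ → ℝ) (γ₀ : ℝ) (Φ : Set Plane) (x : Plane) : ℝ :=
  sInf ((fun w => Real.logb 2 (1 + SrINR ℓ γ₀ Φ w)) '' {w ∈ Φ | ‖w‖ ≤ ‖x‖})

/-- The virtual decoding delay of a message of `m` bits from `x` to the typical receiver. -/
def vDelay (ℓ : ℝ → ℝ) (γ₀ m : ℝ) (Φ : Set Plane) (x : Plane) : ℝ :=
  m / rate ℓ γ₀ Φ x

/-- The SIC decoding delay from `x` to the typical receiver: the supremum of the virtual
decoding delays over the transmitters `w ∈ Φ` with higher received power, i.e. `‖w‖ ≤ ‖x‖`. -/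
def sicDelay (ℓ : ℝ → ℝ) (γ₀ m : ℝ) (Φ : Set Plane) (x : Plane) : ℝ :=
  sSup ((fun w => vDelay ℓ γ₀ m Φ w) '' {w ∈ Φ | ‖w‖ ≤ ‖x‖})

-- helpers
lemma rpow_inv_rpow' {x β : ℝ} (hx : 0 ≤ x) (hβ : β ≠ 0) : (x ^ (1/β)) ^ β = x := by
  rw [← Real.rpow_mul hx, one_div_mul_cancel hβ, Real.rpow_one]

lemma rpow_rpow_inv' {x β : ℝ} (hx : 0 ≤ x) (hβ : β ≠ 0) : (x ^ β) ^ (1/β) = x := by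
  rw [← Real.rpow_mul hx, mul_one_div_cancel hβ, Real.rpow_one]

lemma card_annulus_le (Φ : Set Plane) (σ ρ ν : ℝ)
    (hloc : ∀ R : ℝ, (Φ ∩ Metric.closedBall 0 R).Finite)
    (hreg : RingRegulated Φ σ ρ ν)
    (r s : ℝ) (hr : 0 ≤ r) (hrs : r < s)
    (S : Finset Plane) (hS : ∀ w ∈ S, w ∈ Φ ∧ r < ‖w‖ ∧ ‖w‖ < s) :
    (S.card : ℝ) ≤ σ + ρ * (s - r) + ν * (s ^ 2 - r ^ 2) := by
  have hsub : (S : Set Plane) ⊆ Φ ∩ {z : Plane | r < ‖z‖ ∧ ‖z‖ < s} := by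
    intro w hw
    obtain ⟨h1, h2, h3⟩ := hS w (by simpa using hw)
    exact ⟨h1, h2, h3⟩
  have hfin : (Φ ∩ {z : Plane | r < ‖z‖ ∧ ‖z‖ < s}).Finite := by
    apply (hloc s).subset
    rintro z ⟨hz1, _, hz3⟩
    exact ⟨hz1, by simpa [Metric.mem_closedBall, dist_zero_right] using hz3.le⟩
  have h1 : S.card ≤ (Φ ∩ {z : Plane | r < ‖z‖ ∧ ‖z‖ < s}).ncard := by
    simpa [Set.ncard_coe_finset] using Set.ncard_le_ncard hsub hfin
  calc (S.card : ℝ) ≤ _ := Nat.cast_le.mpr h1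
  _ ≤ _ := hreg r s hr hrs

lemma finset_sum_eq_integral (S : Finset Plane) (g : Plane → ℝ) (L : ℝ)
    (hg : ∀ w ∈ S, 0 ≤ g w ∧ g w ≤ L) :
    ∑ w ∈ S, g w
      = ∫ u in Set.Ioo (0:ℝ) L,
          (∑ w ∈ S, (Set.Ioo (0:ℝ) (g w)).indicator (fun _ => (1:ℝ)) u) := by
  have hint : ∀ w ∈ S, Integrable ((Set.Ioo (0:ℝ) (g w)).indicator (fun _ => (1:ℝ)))
      (volume.restrict (Set.Ioo (0:ℝ) L)) := by
    intro w _
    rw [integrable_indicator_iff measurableSet_Ioo]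
    refine integrableOn_const ?_
    exact (lt_of_le_of_lt (Measure.restrict_apply_le _ _) measure_Ioo_lt_top).ne
  rw [MeasureTheory.integral_finset_sum _ hint]
  refine (Finset.sum_congr rfl fun w hw => ?_).symm
  rw [MeasureTheory.setIntegral_indicator measurableSet_Ioo]
  have : Set.Ioo (0:ℝ) L ∩ Set.Ioo (0:ℝ) (g w) = Set.Ioo (0:ℝ) (g w) := by
    rw [Set.Ioo_inter_Ioo]
    simp [min_eq_right (hg w hw).2]
  rw [this]
  simp [Real.volume_Ioo, ENNReal.toReal_ofReal (hg w hw).1, (hg w hw).1]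

lemma bracket_ineq {A T Q β d : ℝ} (hβ0 : 0 < β) (hbd : 0 < β - d)
    (h : β * A ≤ (β - d) * T + Q * (β - d)) : A / (1 - d/β) ≤ T + Q := by
  have e : 1 - d/β = (β - d)/β := by field_simp
  rw [e, div_div_eq_mul_div, div_le_iff₀ hbd]
  nlinarith [h]

set_option maxHeartbeats 1000000 in
lemma interference_le (Φ : Set Plane) (σ ρ ν : ℝ)
    (hσ : 0 ≤ σ) (hρ : 0 ≤ ρ) (hν : 0 ≤ ν)
    (hloc : ∀ R : ℝ, (Φ ∩ Metric.closedBall 0 R).Finite)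
    (hreg : RingRegulated Φ σ ρ ν)
    (ℓ : ℝ → ℝ) (hℓ0 : ∀ r, 0 ≤ ℓ r)
    (hℓanti : AntitoneOn ℓ (Set.Ici 0))
    (C C' r₀ β : ℝ) (hC' : 0 < C') (hCC' : C' ≤ C) (hr₀ : 0 < r₀) (hβ : 2 < β)
    (hℓlb : ∀ r, r₀ < r → C' * r ^ (-β) ≤ ℓ r)
    (hℓub : ∀ r, r₀ < r → ℓ r ≤ C * r ^ (-β))
    (hΦr₀ : ∀ w ∈ Φ, r₀ < ‖w‖)
    (r : ℝ) (hr : r₀ < r) :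
    (∑' w : {w : Plane // w ∈ Φ ∧ r < ‖w‖}, ℓ ‖(w : Plane)‖)
      ≤ σ * ℓ r + C * ρ * r ^ (1-β) / (β-1) + 2 * C * ν * r ^ (2-β) / (β-2) := by
  classical
  have hr0 : 0 < r := hr₀.trans hr
  have hβ0 : (0:ℝ) < β := by linarith
  have hβ1 : (0:ℝ) < β - 1 := by linarith
  have hβ2 : (0:ℝ) < β - 2 := by linarith
  have hC0 : (0:ℝ) < C := lt_of_lt_of_le hC' hCC'
  set L := ℓ r with hLdef
  have hL0 : 0 < L := lt_of_lt_of_le (by positivity) (hℓlb r hr)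
  have hLC : L ≤ C * r ^ (-β) := hℓub r hr
  have hrβ : (0:ℝ) < r ^ β := Real.rpow_pos_of_pos hr0 β
  have hLrβC : L * r ^ β ≤ C := by
    have h6 : C * r ^ (-β) * r ^ β = C := by
      rw [Real.rpow_neg hr0.le]; field_simp
    nlinarith [mul_le_mul_of_nonneg_right hLC hrβ.le]
  have hP1 : (0:ℝ) ≤ r ^ (1-β) := Real.rpow_nonneg hr0.le _
  have hP2 : (0:ℝ) ≤ r ^ (2-β) := Real.rpow_nonneg hr0.le _
  have hRHS0 : 0 ≤ σ * L + C * ρ * r ^ (1-β) / (β-1) + 2 * C * ν * r ^ (2-β) / (β-2) := by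
    positivity
  -- integrability facts
  have h1m : (-1:ℝ) < -(1/β) := by
    have : 1/β < 1 := by rw [div_lt_one hβ0]; linarith
    linarith
  have h2m : (-1:ℝ) < -(2/β) := by
    have : 2/β < 1 := by rw [div_lt_one hβ0]; linarith
    linarith
  have hint1 : IntegrableOn (fun u : ℝ => u ^ (-(1/β))) (Set.Ioo (0:ℝ) L) volume :=
    (intervalIntegral.integrableOn_Ioo_rpow_iff hL0).2 h1m
  have hint2 : IntegrableOn (fun u : ℝ => u ^ (-(2/β))) (Set.Ioo (0:ℝ) L) volume :=
    (intervalIntegral.integrableOn_Ioo_rpow_iff hL0).2 h2m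
  have hintc : IntegrableOn (fun _ : ℝ => (σ - ρ*r - ν*r^2)) (Set.Ioo (0:ℝ) L) volume :=
    integrableOn_const (by rw [Real.volume_Ioo]; exact ENNReal.ofReal_lt_top.ne)
  have hG_int : IntegrableOn (fun u : ℝ => (σ - ρ*r - ν*r^2) + (ρ * C^(1/β)) * u ^ (-(1/β))
      + (ν * C^(2/β)) * u ^ (-(2/β))) (Set.Ioo (0:ℝ) L) volume :=
    (hintc.add (hint1.const_mul _)).add (hint2.const_mul _)
  have hlt_su : ∀ u t : ℝ, 0 < u → 0 < t → u * t ^ β < C → t < C^(1/β) * u ^ (-(1/β)) := by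
    intro u t hu ht h
    have h2 : t ^ β < C / u := (lt_div_iff₀ hu).2 (by nlinarith)
    have h3 : (t ^ β) ^ (1/β) < (C/u) ^ (1/β) :=
      Real.rpow_lt_rpow (Real.rpow_nonneg ht.le β) h2 (by positivity)
    rw [rpow_rpow_inv' ht.le hβ0.ne'] at h3
    calc t < (C/u)^(1/β) := h3
    _ = C^(1/β) * u ^ (-(1/β)) := by
        rw [Real.div_rpow hC0.le hu.le, Real.rpow_neg hu.le, div_eq_mul_inv]
  -- main bound over arbitrary finite subsets
  have main : ∀ S : Finset Plane, (∀ w ∈ S, w ∈ Φ ∧ r < ‖w‖) →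
      ∑ w ∈ S, ℓ ‖w‖ ≤ σ * L + C * ρ * r ^ (1-β) / (β-1) + 2 * C * ν * r ^ (2-β) / (β-2) := by
    intro S hSmem
    have hind_int : ∀ w ∈ S, Integrable ((Set.Ioo (0:ℝ) (ℓ ‖w‖)).indicator (fun _ => (1:ℝ)))
        (volume.restrict (Set.Ioo (0:ℝ) L)) := by
      intro w _
      rw [integrable_indicator_iff measurableSet_Ioo]
      exact integrableOn_const
        ((lt_of_le_of_lt (Measure.restrict_apply_le _ _) measure_Ioo_lt_top).ne)
    have key : ∀ u ∈ Set.Ioo (0:ℝ) L,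
        (∑ w ∈ S, (Set.Ioo (0:ℝ) (ℓ ‖w‖)).indicator (fun _ => (1:ℝ)) u)
          ≤ (σ - ρ*r - ν*r^2) + (ρ * C^(1/β)) * u ^ (-(1/β)) + (ν * C^(2/β)) * u ^ (-(2/β)) := by
      intro u hu
      obtain ⟨hu0, huL⟩ := hu
      have hrsu : r < C^(1/β) * u ^ (-(1/β)) := by
        refine hlt_su u r hu0 hr0 ?_
        nlinarith [hrβ, mul_lt_mul_of_pos_right huL hrβ]
      have hsum : (∑ w ∈ S, (Set.Ioo (0:ℝ) (ℓ ‖w‖)).indicator (fun _ => (1:ℝ)) u)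
          = ((S.filter (fun w => u < ℓ ‖w‖)).card : ℝ) := by
        rw [Finset.card_filter]
        push_cast
        refine Finset.sum_congr rfl fun w hw => ?_
        by_cases h : u < ℓ ‖w‖
        · simp [Set.indicator_of_mem, Set.mem_Ioo, hu0, h]
        · simp [Set.mem_Ioo, h]
      rw [hsum]
      have hfilter : ∀ w ∈ S.filter (fun w => u < ℓ ‖w‖),
          w ∈ Φ ∧ r < ‖w‖ ∧ ‖w‖ < C^(1/β) * u ^ (-(1/β)) := by
        intro w hw
        rw [Finset.mem_filter] at hw
        obtain ⟨hwS, hwu⟩ := hw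
        obtain ⟨hwΦ, hwr⟩ := hSmem w hwS
        have hw0 : 0 < ‖w‖ := lt_trans hr0 hwr
        refine ⟨hwΦ, hwr, hlt_su u ‖w‖ hu0 hw0 ?_⟩
        have h5 : ℓ ‖w‖ ≤ C * ‖w‖ ^ (-β) := hℓub _ (hΦr₀ w hwΦ)
        have h6 : C * ‖w‖^(-β) * ‖w‖^β = C := by
          rw [Real.rpow_neg hw0.le]; field_simp
        nlinarith [Real.rpow_pos_of_pos hw0 β,
          mul_lt_mul_of_pos_right (lt_of_lt_of_le hwu h5) (Real.rpow_pos_of_pos hw0 β)]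
      have hcard := card_annulus_le Φ σ ρ ν hloc hreg r (C^(1/β) * u ^ (-(1/β)))
        hr0.le hrsu _ hfilter
      have e2 : (C^(1/β) * u ^ (-(1/β)))^2 = C^(2/β) * u ^ (-(2/β)) := by
        rw [mul_pow, ← Real.rpow_natCast (C^(1/β)) 2, ← Real.rpow_natCast (u^(-(1/β))) 2,
          ← Real.rpow_mul hC0.le, ← Real.rpow_mul hu0.le,
          show (1/β) * ((2:ℕ):ℝ) = 2/β by push_cast; ring,
          show (-(1/β)) * ((2:ℕ):ℝ) = -(2/β) by push_cast; ring]
      calc ((S.filter (fun w => u < ℓ ‖w‖)).card : ℝ)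
          ≤ σ + ρ*((C^(1/β) * u ^ (-(1/β))) - r) + ν*((C^(1/β) * u ^ (-(1/β)))^2 - r^2) := hcard
      _ = (σ - ρ*r - ν*r^2) + (ρ * C^(1/β)) * u ^ (-(1/β)) + (ν * C^(2/β)) * u ^ (-(2/β)) := by
          rw [e2]; ring
    have hgL : ∀ w ∈ S, 0 ≤ ℓ ‖w‖ ∧ ℓ ‖w‖ ≤ L := by
      intro w hw
      obtain ⟨hwΦ, hwr⟩ := hSmem w hw
      exact ⟨hℓ0 _, hℓanti (Set.mem_Ici.2 hr0.le) (Set.mem_Ici.2 (norm_nonneg w)) hwr.le⟩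
    have step1 := finset_sum_eq_integral S (fun w => ℓ ‖w‖) L hgL
    have step2 : (∫ u in Set.Ioo (0:ℝ) L,
          (∑ w ∈ S, (Set.Ioo (0:ℝ) (ℓ ‖w‖)).indicator (fun _ => (1:ℝ)) u))
        ≤ ∫ u in Set.Ioo (0:ℝ) L, ((σ - ρ*r - ν*r^2) + (ρ * C^(1/β)) * u ^ (-(1/β))
            + (ν * C^(2/β)) * u ^ (-(2/β))) :=
      setIntegral_mono_on (integrable_finset_sum _ hind_int) hG_int measurableSet_Ioo key
    have hIoo : ∀ c : ℝ, -1 < c → (∫ u in Set.Ioo (0:ℝ) L, u ^ c) = L ^ (c+1) / (c+1) := by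
      intro c hc
      rw [← MeasureTheory.integral_Ioc_eq_integral_Ioo, ← intervalIntegral.integral_of_le hL0.le,
        integral_rpow (Or.inl hc), Real.zero_rpow (show c+1 ≠ 0 by linarith), sub_zero]
    have step3 : (∫ u in Set.Ioo (0:ℝ) L, ((σ - ρ*r - ν*r^2) + (ρ * C^(1/β)) * u ^ (-(1/β))
            + (ν * C^(2/β)) * u ^ (-(2/β))))
        = (σ - ρ*r - ν*r^2) * L + (ρ * C^(1/β)) * (L ^ (-(1/β)+1) / (-(1/β)+1))
          + (ν * C^(2/β)) * (L ^ (-(2/β)+1) / (-(2/β)+1)) := by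
      have hfg : Integrable (fun u : ℝ => (σ - ρ*r - ν*r^2) + (ρ * C^(1/β)) * u ^ (-(1/β)))
          (volume.restrict (Set.Ioo (0:ℝ) L)) := hintc.add (hint1.const_mul _)
      calc (∫ u in Set.Ioo (0:ℝ) L, ((σ - ρ*r - ν*r^2) + (ρ * C^(1/β)) * u ^ (-(1/β))
              + (ν * C^(2/β)) * u ^ (-(2/β))))
          = (∫ u in Set.Ioo (0:ℝ) L, ((σ - ρ*r - ν*r^2) + (ρ * C^(1/β)) * u ^ (-(1/β))))
            + (∫ u in Set.Ioo (0:ℝ) L, (ν * C^(2/β)) * u ^ (-(2/β))) :=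
            MeasureTheory.integral_add hfg (hint2.const_mul _)
        _ = ((∫ _u in Set.Ioo (0:ℝ) L, (σ - ρ*r - ν*r^2))
              + (∫ u in Set.Ioo (0:ℝ) L, (ρ * C^(1/β)) * u ^ (-(1/β))))
            + (∫ u in Set.Ioo (0:ℝ) L, (ν * C^(2/β)) * u ^ (-(2/β))) :=
            congrArg (fun t => t + (∫ u in Set.Ioo (0:ℝ) L, (ν * C^(2/β)) * u ^ (-(2/β))))
              (MeasureTheory.integral_add hintc (hint1.const_mul _))
        _ = (σ - ρ*r - ν*r^2) * L + (ρ * C^(1/β)) * (L ^ (-(1/β)+1) / (-(1/β)+1))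
            + (ν * C^(2/β)) * (L ^ (-(2/β)+1) / (-(2/β)+1)) := by
            rw [MeasureTheory.integral_const_mul, MeasureTheory.integral_const_mul,
              hIoo _ h1m, hIoo _ h2m, MeasureTheory.setIntegral_const,
              Real.volume_real_Ioo, sub_zero, max_eq_left hL0.le, smul_eq_mul, mul_comm]
    -- Bernoulli estimates
    have hLβp : (0:ℝ) < L ^ (1/β) := Real.rpow_pos_of_pos hL0 _
    have hCβp : (0:ℝ) < C ^ (1/β) := Real.rpow_pos_of_pos hC0 _
    set y : ℝ := C^(1/β) / (L^(1/β) * r) with hy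
    have hy0 : 0 < y := by positivity
    have hy1 : 1 ≤ y := by
      rw [hy, le_div_iff₀ (by positivity), one_mul]
      have e : (L * r^β) ^ (1/β) = L^(1/β) * r := by
        rw [Real.mul_rpow hL0.le hrβ.le, rpow_rpow_inv' hr0.le hβ0.ne']
      rw [← e]
      exact Real.rpow_le_rpow (by positivity) hLrβC (by positivity)
    have hyβ : y ^ β = C / (L * r^β) := by
      rw [hy, Real.div_rpow (Real.rpow_nonneg hC0.le _) (by positivity),
        rpow_inv_rpow' hC0.le hβ0.ne',
        Real.mul_rpow hLβp.le hr0.le, rpow_inv_rpow' hL0.le hβ0.ne']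
    have hbern1 : β * y - (β - 1) ≤ y ^ β := by
      have h := one_add_mul_self_le_rpow_one_add
        (show (-1:ℝ) ≤ y - 1 by linarith) (show (1:ℝ) ≤ β by linarith)
      have e : (1:ℝ) + (y - 1) = y := by ring
      rw [e] at h
      linarith
    have hbern2 : β * y^2 - (β - 2) ≤ 2 * y ^ β := by
      have h := one_add_mul_self_le_rpow_one_add
        (show (-1:ℝ) ≤ y^2 - 1 by nlinarith) (show (1:ℝ) ≤ β/2 by linarith)
      have e : (1:ℝ) + (y^2 - 1) = y^2 := by ring
      rw [e] at h
      have e2 : (y^2) ^ (β/2) = y ^ β := by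
        rw [← Real.rpow_natCast y 2, ← Real.rpow_mul hy0.le,
          show ((2:ℕ):ℝ) * (β/2) = β by push_cast; ring]
      rw [e2] at h
      linarith
    have hyrL : y * (r * L) = C^(1/β) * L ^ (1 - 1/β) := by
      rw [hy, Real.rpow_sub hL0, Real.rpow_one]
      field_simp
    have hyβrL : y^β * (r * L) = C * r ^ (1 - β) := by
      rw [hyβ, Real.rpow_sub hr0, Real.rpow_one]
      field_simp
    have hy2r2L : y^2 * (r^2 * L) = C^(2/β) * L ^ (1 - 2/β) := by
      rw [hy, div_pow, mul_pow, Real.rpow_sub hL0, Real.rpow_one]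
      rw [show (C^(1/β))^2 = C^(2/β) by
          rw [← Real.rpow_natCast (C^(1/β)) 2, ← Real.rpow_mul hC0.le,
            show (1/β) * ((2:ℕ):ℝ) = 2/β by push_cast; ring],
        show (L^(1/β))^2 = L^(2/β) by
          rw [← Real.rpow_natCast (L^(1/β)) 2, ← Real.rpow_mul hL0.le,
            show (1/β) * ((2:ℕ):ℝ) = 2/β by push_cast; ring]]
      have hL2β : L^(2/β) ≠ 0 := (Real.rpow_pos_of_pos hL0 _).ne'
      field_simp
    have hyβr2L : y^β * (r^2 * L) = C * r ^ (2 - β) := by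
      rw [hyβ, Real.rpow_sub hr0,
        show r ^ (2:ℝ) = r^2 by
          rw [show (2:ℝ) = ((2:ℕ):ℝ) by norm_num, Real.rpow_natCast]]
      field_simp
    have h1 : β * (C^(1/β) * L^(1-1/β)) ≤ (β-1)*(r*L) + C * r^(1-β) := by
      have e := mul_le_mul_of_nonneg_right hbern1 (show (0:ℝ) ≤ r * L by positivity)
      calc β * (C^(1/β)*L^(1-1/β)) = (β*y)*(r*L) := by rw [← hyrL]; ring
      _ = (β*y - (β-1))*(r*L) + (β-1)*(r*L) := by ring
      _ ≤ y^β*(r*L) + (β-1)*(r*L) := by nlinarith [e]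
      _ = (β-1)*(r*L) + C * r^(1-β) := by rw [hyβrL]; ring
    have h2 : β * (C^(2/β) * L^(1-2/β)) ≤ (β-2)*(r^2*L) + 2*(C * r^(2-β)) := by
      have e := mul_le_mul_of_nonneg_right hbern2 (show (0:ℝ) ≤ r^2 * L by positivity)
      calc β * (C^(2/β)*L^(1-2/β)) = (β*y^2)*(r^2*L) := by rw [← hy2r2L]; ring
      _ = (β*y^2 - (β-2))*(r^2*L) + (β-2)*(r^2*L) := by ring
      _ ≤ (2*y^β)*(r^2*L) + (β-2)*(r^2*L) := by nlinarith [e]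
      _ = (β-2)*(r^2*L) + 2*(C * r^(2-β)) := by
          rw [show (2*y^β)*(r^2*L) = 2*(y^β*(r^2*L)) by ring, hyβr2L]
          ring
    have hbr1 : C^(1/β) * L^(1-1/β) / (1 - 1/β) ≤ r*L + C * r^(1-β)/(β-1) := by
      apply bracket_ineq hβ0 (show (0:ℝ) < β - 1 by linarith)
      rw [div_mul_cancel₀ _ (show (β:ℝ) - 1 ≠ 0 from hβ1.ne')]
      exact h1
    have hbr2 : C^(2/β) * L^(1-2/β) / (1 - 2/β) ≤ r^2*L + 2*C * r^(2-β)/(β-2) := by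
      apply bracket_ineq hβ0 (show (0:ℝ) < β - 2 by linarith)
      rw [div_mul_cancel₀ _ (show (β:ℝ) - 2 ≠ 0 from hβ2.ne')]
      linarith [h2]
    have hfin : (σ - ρ*r - ν*r^2) * L + (ρ * C^(1/β)) * (L ^ (-(1/β)+1) / (-(1/β)+1))
          + (ν * C^(2/β)) * (L ^ (-(2/β)+1) / (-(2/β)+1))
        ≤ σ * L + C * ρ * r ^ (1-β) / (β-1) + 2 * C * ν * r ^ (2-β) / (β-2) := by
      rw [show -(1/β)+1 = 1 - 1/β by ring, show -(2/β)+1 = 1 - 2/β by ring]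
      have m1 := mul_le_mul_of_nonneg_left hbr1 hρ
      have m2 := mul_le_mul_of_nonneg_left hbr2 hν
      have q1 : (ρ * C^(1/β)) * (L^(1-1/β)/(1-1/β)) = ρ * (C^(1/β) * L^(1-1/β)/(1-1/β)) := by
        ring
      have q2 : (ν * C^(2/β)) * (L^(1-2/β)/(1-2/β)) = ν * (C^(2/β) * L^(1-2/β)/(1-2/β)) := by
        ring
      rw [q1, q2]
      refine le_trans (add_le_add (add_le_add le_rfl m1) m2) (le_of_eq ?_)
      ring
    have e0 : ∑ w ∈ S, ℓ ‖w‖ = ∫ u in Set.Ioo (0:ℝ) L,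
        (∑ w ∈ S, (Set.Ioo (0:ℝ) (ℓ ‖w‖)).indicator (fun _ => (1:ℝ)) u) := step1
    rw [e0]
    exact step2.trans (le_of_eq step3 |>.trans hfin)
  apply tsum_le_of_sum_le' hRHS0
  intro s
  rw [← Finset.sum_image (g := Subtype.val) (f := fun w : Plane => ℓ ‖w‖)
    (fun x _ y _ h => Subtype.ext h)]
  apply main
  intro w hw
  obtain ⟨i, _, rfl⟩ := Finset.mem_image.1 hw
  exact i.2

set_option maxHeartbeats 1000000 in
lemma SrINR_ge (Φ : Set Plane) (σ ρ ν : ℝ)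
    (hσ : 0 ≤ σ) (hρ : 0 ≤ ρ) (hν : 0 ≤ ν)
    (hloc : ∀ R : ℝ, (Φ ∩ Metric.closedBall 0 R).Finite)
    (hreg : RingRegulated Φ σ ρ ν)
    (ℓ : ℝ → ℝ) (hℓ0 : ∀ r, 0 ≤ ℓ r)
    (hℓanti : AntitoneOn ℓ (Set.Ici 0))
    (C C' r₀ β : ℝ) (hC' : 0 < C') (hCC' : C' ≤ C) (hr₀ : 0 < r₀) (hβ : 2 < β)
    (hℓlb : ∀ r, r₀ < r → C' * r ^ (-β) ≤ ℓ r)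
    (hℓub : ∀ r, r₀ < r → ℓ r ≤ C * r ^ (-β))
    (hΦr₀ : ∀ w ∈ Φ, r₀ < ‖w‖)
    (γ₀ : ℝ) (hγ₀ : 0 < γ₀)
    (η₀ α : ℝ) (hη₀ : 0 < η₀) (hα0 : 0 < α) (hα1 : α < 1) (hαη : σ < α / η₀)
    (v : Plane) (hvΦ : v ∈ Φ)
    (hvτ : ‖v‖ ≤ tau0 C' γ₀ β σ ((C / C') * (ρ / (β - 1)))
      ((C / C') * (2 * ν / (β - 2))) η₀ α) :
    η₀ ≤ SrINR ℓ γ₀ Φ v := by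
  have hr : r₀ < ‖v‖ := hΦr₀ v hvΦ
  set r := ‖v‖ with hrdef
  have hr0 : 0 < r := hr₀.trans hr
  have hβ0 : (0:ℝ) < β := by linarith
  have hβ1 : (0:ℝ) < β - 1 := by linarith
  have hβ2 : (0:ℝ) < β - 2 := by linarith
  have hC0 : (0:ℝ) < C := lt_of_lt_of_le hC' hCC'
  set ρβ := (C / C') * (ρ / (β - 1)) with hρβd
  set νβ := (C / C') * (2 * ν / (β - 2)) with hνβd
  have hρβ0 : 0 ≤ ρβ := by positivity
  rw [tau0, le_min_iff] at hvτ
  obtain ⟨hτ1, hτ2⟩ := hvτ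
  rcases eq_or_lt_of_le hν with hν0 | hν0
  · exfalso
    have hz : νβ = 0 := by rw [hνβd, ← hν0]; ring
    rw [hz] at hτ1
    simp only [mul_zero, div_zero] at hτ1
    linarith
  have hνβ0 : 0 < νβ := by rw [hνβd]; positivity
  have hquad : σ + ρβ * r + νβ * r^2 ≤ α / η₀ := by
    have hq : 0 < α/η₀ - σ := by linarith
    have hnn : (0:ℝ) ≤ ρβ^2 + 4*νβ*(α/η₀ - σ) := by positivity
    have hs := Real.sq_sqrt hnn
    have hsn := Real.sqrt_nonneg (ρβ^2 + 4*νβ*(α/η₀ - σ))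
    have h1' : 2*νβ*r + ρβ ≤ Real.sqrt (ρβ^2 + 4*νβ*(α/η₀ - σ)) := by
      have := (le_div_iff₀ (by positivity : (0:ℝ) < 2*νβ)).1 hτ1
      linarith
    have hsq : (2*νβ*r + ρβ)^2 ≤ ρβ^2 + 4*νβ*(α/η₀ - σ) := by
      have h11 := pow_le_pow_left₀ (by positivity : (0:ℝ) ≤ 2*νβ*r + ρβ) h1' 2
      rwa [hs] at h11
    nlinarith [hsq, hνβ0, hr0]
  have hI := interference_le Φ σ ρ ν hσ hρ hν hloc hreg ℓ hℓ0 hℓanti C C' r₀ β hC' hCC'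
    hr₀ hβ hℓlb hℓub hΦr₀ r hr
  set L := ℓ r with hL
  have hLlb : C' * r ^ (-β) ≤ L := hℓlb r hr
  have hL0 : 0 < L := lt_of_lt_of_le (by positivity) hLlb
  have hrβ : (0:ℝ) < r ^ β := Real.rpow_pos_of_pos hr0 β
  have hbridge1 : C * ρ * r ^ (1-β) / (β-1) ≤ ρβ * r * L := by
    have e : ρβ * r * (C' * r^(-β)) = C * ρ * r^(1-β) / (β-1) := by
      rw [hρβd, Real.rpow_sub hr0, Real.rpow_one, Real.rpow_neg hr0.le]
      field_simp
    calc C * ρ * r^(1-β)/(β-1) = ρβ * r * (C' * r^(-β)) := e.symm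
    _ ≤ ρβ * r * L := mul_le_mul_of_nonneg_left hLlb (by positivity)
  have hbridge2 : 2 * C * ν * r ^ (2-β) / (β-2) ≤ νβ * r^2 * L := by
    have e : νβ * r^2 * (C' * r^(-β)) = 2 * C * ν * r^(2-β) / (β-2) := by
      rw [hνβd, Real.rpow_sub hr0, Real.rpow_neg hr0.le,
        show r ^ (2:ℝ) = r^2 by rw [show (2:ℝ) = ((2:ℕ):ℝ) by norm_num, Real.rpow_natCast]]
      field_simp
    calc 2*C*ν*r^(2-β)/(β-2) = νβ * r^2 * (C' * r^(-β)) := e.symm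
    _ ≤ νβ * r^2 * L := mul_le_mul_of_nonneg_left hLlb (by positivity)
  have hIα : tailInterference ℓ Φ r ≤ α/η₀ * L := by
    have h9 : tailInterference ℓ Φ r ≤ (σ + ρβ*r + νβ*r^2) * L := by
      calc tailInterference ℓ Φ r
          ≤ σ * L + C*ρ*r^(1-β)/(β-1) + 2*C*ν*r^(2-β)/(β-2) := hI
      _ ≤ σ*L + ρβ*r*L + νβ*r^2*L := by linarith [hbridge1, hbridge2]
      _ = (σ + ρβ*r + νβ*r^2) * L := by ring
    calc tailInterference ℓ Φ r ≤ (σ + ρβ*r + νβ*r^2) * L := h9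
    _ ≤ α/η₀ * L := mul_le_mul_of_nonneg_right hquad hL0.le
  have hγ : γ₀ ≤ (1-α)/η₀ * L := by
    have hK : (0:ℝ) < C' * (1-α) / (η₀ * γ₀) := by
      have : (0:ℝ) < 1 - α := by linarith
      positivity
    have hrK : r ^ β ≤ C' * (1-α) / (η₀ * γ₀) := by
      have h10 := Real.rpow_le_rpow hr0.le hτ2 hβ0.le
      rwa [rpow_inv_rpow' hK.le hβ0.ne'] at h10
    have h7 : r^β * (η₀ * γ₀) ≤ C' * (1-α) := (le_div_iff₀ (by positivity)).1 hrK
    have h8 : γ₀ ≤ (1-α)/η₀ * (C' * r^(-β)) := by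
      rw [Real.rpow_neg hr0.le,
        show (1-α)/η₀ * (C' * (r^β)⁻¹) = C'*(1-α)/(η₀ * r^β) by field_simp,
        le_div_iff₀ (by positivity)]
      nlinarith [h7]
    calc γ₀ ≤ (1-α)/η₀ * (C' * r^(-β)) := h8
    _ ≤ (1-α)/η₀ * L := by
        have : (0:ℝ) ≤ (1-α)/η₀ := by
          have : (0:ℝ) < 1 - α := by linarith
          positivity
        exact mul_le_mul_of_nonneg_left hLlb this
  have hInn : 0 ≤ tailInterference ℓ Φ r := tsum_nonneg fun i => hℓ0 _
  have hden : 0 < tailInterference ℓ Φ r + γ₀ := by linarith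
  have e1 : η₀ * (α/η₀ * L) = α * L := by field_simp
  have e2 : η₀ * ((1-α)/η₀ * L) = (1-α) * L := by field_simp
  show η₀ ≤ ℓ ‖v‖ / (tailInterference ℓ Φ ‖v‖ + γ₀)
  rw [le_div_iff₀ hden]
  nlinarith [mul_le_mul_of_nonneg_left hIα hη₀.le, mul_le_mul_of_nonneg_left hγ hη₀.le, e1, e2]

theorem stmt6 (Φ : Set Plane) (σ ρ ν : ℝ)
    (hσ : 0 ≤ σ) (hρ : 0 ≤ ρ) (hν : 0 ≤ ν)
    (hloc : ∀ R : ℝ, (Φ ∩ Metric.closedBall 0 R).Finite)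
    (hreg : RingRegulated Φ σ ρ ν)
    (ℓ : ℝ → ℝ) (hℓ0 : ∀ r, 0 ≤ ℓ r)
    (hℓanti : AntitoneOn ℓ (Set.Ici 0))
    (hℓbdd : BddAbove (ℓ '' Set.Ici 0))
    (C C' r₀ β : ℝ) (hC' : 0 < C') (hCC' : C' ≤ C) (hr₀ : 0 < r₀) (hβ : 2 < β)
    (hℓlb : ∀ r, r₀ < r → C' * r ^ (-β) ≤ ℓ r)
    (hℓub : ∀ r, r₀ < r → ℓ r ≤ C * r ^ (-β))
    (hΦr₀ : ∀ w ∈ Φ, r₀ < ‖w‖)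
    (γ₀ : ℝ) (hγ₀ : 0 < γ₀) (m : ℝ) (hm : 0 < m)
    (η₀ α : ℝ) (hη₀ : 0 < η₀) (hα0 : 0 < α) (hα1 : α < 1)
    (hαη : σ < α / η₀) :
    sSup ((fun x => sicDelay ℓ γ₀ m Φ x) ''
        {x ∈ Φ | ‖x‖ ≤ tau0 C' γ₀ β σ ((C / C') * (ρ / (β - 1)))
            ((C / C') * (2 * ν / (β - 2))) η₀ α})
      ≤ m / Real.logb 2 (1 + η₀) := by
  have hlog : 0 < Real.logb 2 (1 + η₀) := Real.logb_pos (by norm_num) (by linarith)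
  have hbnd : 0 ≤ m / Real.logb 2 (1 + η₀) := div_nonneg hm.le hlog.le
  apply Real.sSup_le _ hbnd
  rintro _ ⟨x, ⟨hxΦ, hxτ⟩, rfl⟩
  show sicDelay ℓ γ₀ m Φ x ≤ m / Real.logb 2 (1 + η₀)
  rw [sicDelay]
  apply Real.sSup_le _ hbnd
  rintro _ ⟨w, ⟨hwΦ, hwx⟩, rfl⟩
  show vDelay ℓ γ₀ m Φ w ≤ m / Real.logb 2 (1 + η₀)
  have hwτ := le_trans hwx hxτ
  have hrate : Real.logb 2 (1 + η₀) ≤ rate ℓ γ₀ Φ w := by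
    rw [rate]
    refine le_csInf ⟨Real.logb 2 (1 + SrINR ℓ γ₀ Φ w),
      Set.mem_image_of_mem _ (Set.mem_sep hwΦ (le_refl _))⟩ ?_
    rintro b ⟨v, ⟨hvΦ, hvw⟩, rfl⟩
    have hvτ := le_trans hvw hwτ
    have hS := SrINR_ge Φ σ ρ ν hσ hρ hν hloc hreg ℓ hℓ0 hℓanti C C' r₀ β hC' hCC' hr₀ hβ
      hℓlb hℓub hΦr₀ γ₀ hγ₀ η₀ α hη₀ hα0 hα1 hαη v hvΦ hvτ
    exact Real.logb_le_logb_of_le (by norm_num) (by linarith) (by linarith)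
  rw [vDelay]
  exact div_le_div_of_nonneg_left hm.le hlog hrate
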